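/- Let A be a commutative ring and 𝔭 a prime ideal of W_n(A) (p-typical Witt vectors) not containing p. Then there exists a unique i ∈ {0,…,n} and a unique prime ideal 𝔮 of A with gh_i^{-1}(𝔮) = 𝔭, and the induced map A_𝔮 → W_n(A)_𝔭 is an isomorphism. -/

import Mathlib

open Finset

/-- Auxiliary recursive sequence for solving ghost equations up to `p`-power multiples. -/
private noncomputable def wittDD (p n : ℕ) {A : Type} [CommRing A] (b : ℕ → A) : ℕ → A
  | j => b j - ∑ k ∈ (Finset.range j).attach,
      (p : A) ^ (k.1 + (n - k.1) * p ^ (j - k.1) - n) *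
        (wittDD p n b k.1) ^ (p ^ (j - k.1))
  decreasing_by exact Finset.mem_range.mp k.2

private lemma wittGhost_eq (p : ℕ) [hp : Fact p.Prime] (n : ℕ) {A : Type} [CommRing A]
    (b : ℕ → A) {j : ℕ} (hj : j ≤ n) :
    WittVector.ghostComponent j
      (WittVector.mk p (fun k => (p : A) ^ (n - k) * wittDD p n b k)) = (p : A) ^ n * b j := by
  rw [WittVector.ghostComponent_apply, aeval_wittPolynomial, WittVector.coeff_mk]
  have hterm : ∀ k ∈ Finset.range (j + 1),
      (p : A) ^ k * ((p : A) ^ (n - k) * wittDD p n b k) ^ p ^ (j - k)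
        = (p : A) ^ n * ((p : A) ^ (k + (n - k) * p ^ (j - k) - n) *
            (wittDD p n b k) ^ (p ^ (j - k))) := by
    intro k hk
    have hk' : k ≤ j := Nat.lt_succ_iff.mp (Finset.mem_range.mp hk)
    have hpe : 1 ≤ p ^ (j - k) := Nat.one_le_pow _ _ hp.out.pos
    have he : n ≤ k + (n - k) * p ^ (j - k) := by nlinarith [Nat.sub_add_cancel (hk'.trans hj)]
    have h2 : (p:A) ^ (k + (n-k) * p ^ (j-k))
        = (p:A) ^ n * (p:A) ^ (k + (n-k) * p ^ (j-k) - n) := by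
      rw [← pow_add]; congr 1; omega
    rw [mul_pow, ← pow_mul, ← mul_assoc, ← pow_add, h2, mul_assoc]
  rw [Finset.sum_congr rfl hterm, ← Finset.mul_sum]
  congr 1
  rw [Finset.sum_range_succ]
  have hjj : j + (n - j) * p ^ (j - j) - n = 0 := by
    simp only [Nat.sub_self, pow_zero, mul_one]
    omega
  rw [hjj, pow_zero, one_mul]
  have hdj : wittDD p n b j = b j - ∑ k ∈ (Finset.range j).attach,
      (p : A) ^ (k.1 + (n - k.1) * p ^ (j - k.1) - n) *
        (wittDD p n b k.1) ^ (p ^ (j - k.1)) := by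
    rw [wittDD]
  rw [Finset.sum_attach (Finset.range j)
    (f := fun k => (p : A) ^ (k + (n - k) * p ^ (j - k) - n) *
        (wittDD p n b k) ^ (p ^ (j - k)))] at hdj
  rw [hdj]
  simp only [Nat.sub_self, pow_zero, pow_one]
  ring


private lemma iterV_coeff_zero (p : ℕ) [Fact p.Prime] {A : Type} [CommRing A] :
    ∀ (k : ℕ) (z : WittVector p A) (j : ℕ), j < k →
      (WittVector.verschiebung^[k] z).coeff j = 0 := by
  intro k
  induction k with
  | zero => intro z j hj; omega
  | succ k ih =>
    intro z j hj
    rw [Function.iterate_succ_apply']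
    match j with
    | 0 => exact WittVector.verschiebung_coeff_zero _
    | j + 1 =>
      rw [WittVector.verschiebung_coeff_succ]
      exact ih z j (by omega)

private lemma wittKer (p : ℕ) [hp : Fact p.Prime] {A : Type} [CommRing A] :
    ∀ (m : ℕ) (y : WittVector p A), (∀ j ≤ m, WittVector.ghostComponent j y = 0) →
      ∃ z, (p : WittVector p A) ^ m * y = WittVector.verschiebung^[m + 1] z := by
  intro m
  induction m with
  | zero =>
    intro y hy
    have h0 : y.coeff 0 = 0 := by
      have := hy 0 le_rfl
      rwa [WittVector.ghostComponent_apply, aeval_wittPolynomial, Finset.sum_range_one,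
        pow_zero, one_mul, Nat.sub_self, pow_zero, pow_one] at this
    refine ⟨WittVector.mk p (fun k => y.coeff (k + 1)), ?_⟩
    rw [pow_zero, one_mul]
    apply WittVector.ext
    intro j
    match j with
    | 0 => simp [h0, WittVector.verschiebung_coeff_zero]
    | j + 1 => simp [WittVector.verschiebung_coeff_succ, WittVector.coeff_mk]
  | succ m ih =>
    intro y hy
    have h0 : y.coeff 0 = 0 := by
      have := hy 0 (by omega)
      rwa [WittVector.ghostComponent_apply, aeval_wittPolynomial, Finset.sum_range_one,
        pow_zero, one_mul, Nat.sub_self, pow_zero, pow_one] at this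
    -- y = verschiebung z
    obtain ⟨z, hz⟩ : ∃ z, y = WittVector.verschiebung z := by
      refine ⟨WittVector.mk p (fun k => y.coeff (k + 1)), ?_⟩
      apply WittVector.ext
      intro j
      match j with
      | 0 => simp [h0, WittVector.verschiebung_coeff_zero]
      | j + 1 => simp [WittVector.verschiebung_coeff_succ, WittVector.coeff_mk]
    have hz' : ∀ j ≤ m, WittVector.ghostComponent j ((p : WittVector p A) * z) = 0 := by
      intro j hjm
      have := hy (j + 1) (by omega)
      rw [hz, WittVector.ghostComponent_verschiebung] at this
      rw [map_mul, map_natCast]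
      exact this
    obtain ⟨w, hw⟩ := ih ((p : WittVector p A) * z) hz'
    refine ⟨w, ?_⟩
    have hsmul : ∀ (c : ℕ) (x : WittVector p A),
        WittVector.verschiebung ((c : WittVector p A) * x)
          = (c : WittVector p A) * WittVector.verschiebung x := by
      intro c x
      rw [← nsmul_eq_mul, ← nsmul_eq_mul, AddMonoidHom.map_nsmul]
    calc (p : WittVector p A) ^ (m + 1) * y
        = WittVector.verschiebung ((p : WittVector p A) ^ m * ((p : WittVector p A) * z)) := by
          rw [hz]
          rw [show ((p : WittVector p A)) ^ m * ((p : WittVector p A) * z)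
            = ((p ^ (m+1) : ℕ) : WittVector p A) * z by push_cast; ring]
          rw [hsmul]
          push_cast; ring
      _ = WittVector.verschiebung^[m + 1 + 1] w := by
          rw [hw]
          exact (Function.iterate_succ_apply' _ _ _).symm


section
variable (p : ℕ) [hp : Fact p.Prime] (n : ℕ) (A : Type) [CommRing A]
  (g : Fin (n + 1) → (TruncatedWittVector p (n + 1) A →+* A))
  (hg : ∀ (i : Fin (n + 1)) (x : WittVector p A),
      g i (WittVector.truncate (n + 1) x) = WittVector.ghostComponent (i : ℕ) x)

include hg in
private lemma lemA (b : Fin (n + 1) → A) :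
    ∃ x : TruncatedWittVector p (n + 1) A, ∀ j, g j x = (p : A) ^ n * b j := by
  set b' : ℕ → A := fun k => if h : k < n + 1 then b ⟨k, h⟩ else 0 with hb'
  refine ⟨WittVector.truncate (n + 1)
    (WittVector.mk p (fun k => (p : A) ^ (n - k) * wittDD p n b' k)), fun j => ?_⟩
  rw [hg, wittGhost_eq p n b' (by omega : (j : ℕ) ≤ n)]
  congr 1
  simp [hb', j.isLt]
  intro h
  exact absurd j.isLt (by omega)

include hg in
private lemma lemB (x : TruncatedWittVector p (n + 1) A) (hx : ∀ j, g j x = 0) :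
    (p : TruncatedWittVector p (n + 1) A) ^ n * x = 0 := by
  obtain ⟨y, rfl⟩ := WittVector.truncate_surjective p (n + 1) A x
  have hy : ∀ j ≤ n, WittVector.ghostComponent j y = 0 := by
    intro j hj
    have := hx ⟨j, by omega⟩
    rwa [hg] at this
  obtain ⟨z, hz⟩ := wittKer p n y hy
  have : (p : TruncatedWittVector p (n + 1) A) ^ n * WittVector.truncate (n + 1) y
      = WittVector.truncate (n + 1) ((p : WittVector p A) ^ n * y) := by
    rw [map_mul, map_pow, map_natCast]
  rw [this, hz]
  apply TruncatedWittVector.ext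
  intro i
  rw [WittVector.coeff_truncate, iterV_coeff_zero p (n + 1) z i i.isLt]
  simp

end

/-- Let `A` be a commutative ring and `𝔭` a prime ideal of `W_n(A)`
(`p`-typical Witt vectors, normalized indexing, so `W_n = TruncatedWittVector p (n+1)`)
not containing `p`. Then there exist a unique `i ∈ {0,…,n}` and a unique prime ideal `𝔮`
of `A` with `gh_i⁻¹(𝔮) = 𝔭`, and the induced map between the localizations `A_𝔮` and
`W_n(A)_𝔭` is an isomorphism. The ghost maps `gh_i` are characterized via the truncation
map by the ghost components of `W(A)`. -/
theorem localization_of_witt_at_prime_not_containing_p (p : ℕ) [Fact p.Prime] (n : ℕ)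
    (A : Type) [CommRing A]
    (g : Fin (n + 1) → (TruncatedWittVector p (n + 1) A →+* A))
    (hg : ∀ (i : Fin (n + 1)) (x : WittVector p A),
      g i (WittVector.truncate (n + 1) x) = WittVector.ghostComponent (i : ℕ) x)
    (𝔭 : Ideal (TruncatedWittVector p (n + 1) A)) [𝔭.IsPrime]
    (hp𝔭 : (p : TruncatedWittVector p (n + 1) A) ∉ 𝔭) :
    (∃! iq : Fin (n + 1) × { q : Ideal A // q.IsPrime },
      Ideal.comap (g iq.1) iq.2.1 = 𝔭) ∧
    ∀ (i : Fin (n + 1)) (𝔮 : Ideal A) [𝔮.IsPrime] (h : 𝔭 = Ideal.comap (g i) 𝔮),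
      Function.Bijective (Localization.localRingHom 𝔭 𝔮 (g i) h) := by
  classical
  have hPr : 𝔭.IsPrime := inferInstance
  choose xd hxd using fun (i : Fin (n + 1)) (a : A) =>
    lemA p n A g hg (fun j => if j = i then a else 0)
  choose xc hxc using fun (a : A) => lemA p n A g hg (fun _ => a)
  have hpW : (p : TruncatedWittVector p (n + 1) A) ^ n ∉ 𝔭 :=
    fun h => hp𝔭 (hPr.mem_of_pow_mem n h)
  have hcancel : ∀ d : TruncatedWittVector p (n + 1) A,
      (p : TruncatedWittVector p (n + 1) A) ^ n * d ∈ 𝔭 → d ∈ 𝔭 :=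
    fun d hd => (hPr.mem_or_mem hd).resolve_left hpW
  have key : ∀ x y : TruncatedWittVector p (n + 1) A,
      (∀ j, g j x = g j y) → (x ∈ 𝔭 ↔ y ∈ 𝔭) := by
    intro x y hxy
    have h0 : (p : TruncatedWittVector p (n + 1) A) ^ n * (x - y) = 0 :=
      lemB p n A g hg _ (fun j => by rw [map_sub, hxy j, sub_self])
    have hxy𝔭 : x - y ∈ 𝔭 := hcancel _ (by rw [h0]; exact 𝔭.zero_mem)
    constructor
    · intro hx
      have h := 𝔭.sub_mem hx hxy𝔭
      rwa [show x - (x - y) = y by ring] at h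
    · intro hy
      have h := 𝔭.add_mem hy hxy𝔭
      rwa [show y + (x - y) = x by ring] at h
  -- find i with xd i 1 ∉ 𝔭
  have hex : ∃ i, xd i 1 ∉ 𝔭 := by
    by_contra hall
    push_neg at hall
    have hsum : (∑ i, xd i 1) ∈ 𝔭 := Ideal.sum_mem _ (fun i _ => hall i)
    have hk := key (∑ i, xd i 1) ((p : TruncatedWittVector p (n + 1) A) ^ n) ?_
    · exact hpW (hk.mp hsum)
    · intro j
      rw [map_sum, map_pow, map_natCast]
      simp only [hxd, mul_ite, mul_one, mul_zero]
      simp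
  obtain ⟨i, hei⟩ := hex
  have hPmem : ∀ a : A, (∀ x : TruncatedWittVector p (n + 1) A,
      (∀ j, g j x = (p : A) ^ n * (if j = i then a else 0)) → x ∈ 𝔭) ↔ xd i a ∈ 𝔭 := by
    intro a
    constructor
    · intro h; exact h _ (hxd i a)
    · intro h x hx
      exact (key x (xd i a) (fun j => by rw [hx j, hxd i a])).mpr h
  let Q : Ideal A :=
  { carrier := {a : A | ∀ x : TruncatedWittVector p (n + 1) A,
      (∀ j, g j x = (p : A) ^ n * (if j = i then a else 0)) → x ∈ 𝔭}
    zero_mem' := by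
      refine (hPmem 0).mpr ((key (xd i 0) 0 (fun j => ?_)).mpr 𝔭.zero_mem)
      rw [hxd i 0 j, map_zero]
      simp
    add_mem' := by
      intro a b ha hb
      refine (hPmem (a + b)).mpr ((key (xd i (a + b)) (xd i a + xd i b) (fun j => ?_)).mpr
        (𝔭.add_mem ((hPmem a).mp ha) ((hPmem b).mp hb)))
      rw [hxd, map_add, hxd, hxd]
      by_cases hj : j = i <;> simp [hj] <;> ring
    smul_mem' := by
      intro c a ha
      have h1 : xc c * xd i a ∈ 𝔭 := Ideal.mul_mem_left _ _ ((hPmem a).mp ha)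
      have h2 := (key ((p : TruncatedWittVector p (n + 1) A) ^ n * xd i (c * a))
        (xc c * xd i a) (fun j => ?_)).mpr h1
      · have h3 : xd i (c * a) ∈ 𝔭 := hcancel _ h2
        rw [smul_eq_mul]
        exact (hPmem (c * a)).mpr h3
      · rw [map_mul, map_pow, map_natCast, hxd, map_mul, hxc, hxd]
        by_cases hj : j = i <;> simp [hj] <;> ring }
  have hQmem : ∀ a : A, a ∈ Q ↔ xd i a ∈ 𝔭 := fun a => hPmem a
  have QP : Q.IsPrime := by
    constructor
    · intro htop
      have h1 : (1 : A) ∈ Q := htop ▸ Submodule.mem_top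
      exact hei ((hQmem 1).mp h1)
    · intro a b hab
      by_cases ha : a ∈ Q
      · exact Or.inl ha
      · refine Or.inr ?_
        have hxa : xd i a ∉ 𝔭 := fun h => ha ((hQmem a).mpr h)
        have hab𝔭 : (p : TruncatedWittVector p (n + 1) A) ^ n * xd i (a * b) ∈ 𝔭 :=
          Ideal.mul_mem_left _ _ ((hQmem (a * b)).mp hab)
        have hk := (key (xd i a * xd i b)
          ((p : TruncatedWittVector p (n + 1) A) ^ n * xd i (a * b)) (fun j => ?_)).mpr hab𝔭
        · exact (hQmem b).mpr ((hPr.mem_or_mem hk).resolve_left hxa)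
        · rw [map_mul, hxd, hxd, map_mul, map_pow, map_natCast, hxd]
          by_cases hj : j = i <;> simp [hj] <;> ring
  have hcomap : Ideal.comap (g i) Q = 𝔭 := by
    ext x
    rw [Ideal.mem_comap]
    constructor
    · intro hx
      have h1 : xd i 1 * x ∈ 𝔭 := by
        refine hx (xd i 1 * x) (fun j => ?_)
        rw [map_mul, hxd]
        by_cases hj : j = i <;> simp [hj]
      exact (hPr.mem_or_mem h1).resolve_left hei
    · intro hx
      intro y hy
      refine (key y (xd i 1 * x) (fun j => ?_)).mpr (Ideal.mul_mem_left _ _ hx)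
      rw [hy j, map_mul, hxd]
      by_cases hj : j = i <;> simp [hj]
  constructor
  · refine ⟨⟨i, ⟨Q, QP⟩⟩, hcomap, ?_⟩
    rintro ⟨j, ⟨𝔮', h𝔮'⟩⟩ hyp
    simp only at hyp
    have hji : j = i := by
      by_contra hne
      have hmem : xd i 1 ∈ Ideal.comap (g j) 𝔮' := by
        rw [Ideal.mem_comap, hxd i 1 j, if_neg hne, mul_zero]
        exact 𝔮'.zero_mem
      rw [hyp] at hmem
      exact hei hmem
    subst hji
    have hp𝔮' : (p : A) ∉ 𝔮' := by
      intro hmem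
      refine hp𝔭 ?_
      rw [← hyp, Ideal.mem_comap, map_natCast]
      exact hmem
    have h𝔮'Q : 𝔮' = Q := by
      ext a
      constructor
      · intro ha
        intro x hx
        have hmem : x ∈ Ideal.comap (g j) 𝔮' := by
          rw [Ideal.mem_comap, hx j, if_pos rfl]
          exact Ideal.mul_mem_left _ _ ha
        rwa [hyp] at hmem
      · intro ha
        have h1 : xd j a ∈ 𝔭 := (hQmem a).mp ha
        rw [← hyp, Ideal.mem_comap, hxd j a j, if_pos rfl] at h1
        exact (h𝔮'.mem_or_mem h1).resolve_left
          (fun hc => hp𝔮' (h𝔮'.mem_of_pow_mem n hc))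
    exact Prod.ext rfl (Subtype.ext h𝔮'Q)
  · intro i' 𝔮 inst h
    have hmem𝔭 : ∀ x, x ∈ 𝔭 ↔ g i' x ∈ 𝔮 := fun x => by rw [h]; exact Iff.rfl
    have hp𝔮 : (p : A) ∉ 𝔮 := by
      intro hmem
      exact hp𝔭 ((hmem𝔭 _).mpr (by rw [map_natCast]; exact hmem))
    have hq_of : ∀ {c : A}, c ∉ 𝔮 → (p : A) ^ n * c ∉ 𝔮 := by
      intro c hc hmem
      exact (inst.mem_or_mem hmem).elim
        (fun h' => hp𝔮 (inst.mem_of_pow_mem n h')) hc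
    constructor
    · intro u v huv
      obtain ⟨⟨x, s⟩, rfl⟩ := IsLocalization.mk'_surjective 𝔭.primeCompl u
      obtain ⟨⟨y, t⟩, rfl⟩ := IsLocalization.mk'_surjective 𝔭.primeCompl v
      rw [Localization.localRingHom_mk', Localization.localRingHom_mk',
        IsLocalization.mk'_eq_iff_eq] at huv
      obtain ⟨c, hc⟩ := (IsLocalization.eq_iff_exists 𝔮.primeCompl _).mp huv
      have hd0 : ∀ jj, g jj (xd i' ↑c * (↑t * x - ↑s * y)) = 0 := by
        intro jj
        rw [map_mul]
        by_cases hj : jj = i'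
        · subst hj
          rw [hxd, if_pos rfl, map_sub, map_mul, map_mul]
          linear_combination (p : A) ^ n * hc
        · rw [hxd, if_neg hj, mul_zero, zero_mul]
      have hker := lemB p n A g hg _ hd0
      have hu₀n : xd i' ↑c ∉ 𝔭 := by
        intro hmem
        have h1 := (hmem𝔭 _).mp hmem
        rw [hxd, if_pos rfl] at h1
        exact hq_of c.2 h1
      refine IsLocalization.mk'_eq_iff_eq.mpr
        ((IsLocalization.eq_iff_exists 𝔭.primeCompl _).mpr
          ⟨⟨(p : TruncatedWittVector p (n + 1) A) ^ n * xd i' ↑c,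
            fun hmem => hu₀n (hcancel _ hmem)⟩, ?_⟩)
      linear_combination hker
    · intro z
      obtain ⟨⟨a, t⟩, rfl⟩ := IsLocalization.mk'_surjective 𝔮.primeCompl z
      have hxt : xc ↑t ∉ 𝔭 := by
        intro hmem
        have h1 := (hmem𝔭 _).mp hmem
        rw [hxc] at h1
        exact hq_of t.2 h1
      refine ⟨IsLocalization.mk' (Localization.AtPrime 𝔭) (xc ↑a)
        (⟨xc ↑t, hxt⟩ : 𝔭.primeCompl), ?_⟩
      rw [Localization.localRingHom_mk', IsLocalization.mk'_eq_iff_eq]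
      congr 1
      show (↑t : A) * (g i') (xc ↑a) = (g i') (xc ↑t) * a
      rw [hxc, hxc]
      ring
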